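/- Let Σ_{Y|X} be positive definite r×r, [Γ₁ Γ₀] orthogonal with Γ₁ of size p×u (0 < u < p), Ω₁ and Ω₀ positive definite, and Σ_X = Γ₁Ω₁Γ₁ᵀ + Γ₀Ω₀Γ₀ᵀ. Then Σ_{Y|X} ⊗ Σ_X⁻¹ − Σ_{Y|X} ⊗ Γ₁Ω₁⁻¹Γ₁ᵀ = Σ_{Y|X} ⊗ Γ₀Ω₀⁻¹Γ₀ᵀ, and this difference is positive semidefinite. -/

import Mathlib

open Matrix Kronecker

lemma kron_posSemidef {m n : Type*} [Fintype m] [Fintype n] [DecidableEq m] [DecidableEq n]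
    {A : Matrix m m ℝ} {B : Matrix n n ℝ} (hA : A.PosSemidef) (hB : B.PosSemidef) :
    (A ⊗ₖ B).PosSemidef := by
  exact hA.kronecker hB

theorem stmt13 (p u r : ℕ) (hu : 0 < u) (hup : u < p)
    (SYX : Matrix (Fin r) (Fin r) ℝ) (hS : SYX.PosDef)
    (Γ₁ : Matrix (Fin p) (Fin u) ℝ) (Γ₀ : Matrix (Fin p) (Fin (p - u)) ℝ)
    (Ω₁ : Matrix (Fin u) (Fin u) ℝ) (Ω₀ : Matrix (Fin (p - u)) (Fin (p - u)) ℝ)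
    (hΩ₁ : Ω₁.PosDef) (hΩ₀ : Ω₀.PosDef)
    (h1 : Γ₁ᵀ * Γ₁ = 1) (h0 : Γ₀ᵀ * Γ₀ = 1) (h10 : Γ₁ᵀ * Γ₀ = 0)
    (hfull : Γ₁ * Γ₁ᵀ + Γ₀ * Γ₀ᵀ = 1) :
    SYX ⊗ₖ (Γ₁ * Ω₁ * Γ₁ᵀ + Γ₀ * Ω₀ * Γ₀ᵀ)⁻¹ - SYX ⊗ₖ (Γ₁ * Ω₁⁻¹ * Γ₁ᵀ)
        = SYX ⊗ₖ (Γ₀ * Ω₀⁻¹ * Γ₀ᵀ) ∧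
      (SYX ⊗ₖ (Γ₁ * Ω₁ * Γ₁ᵀ + Γ₀ * Ω₀ * Γ₀ᵀ)⁻¹
        - SYX ⊗ₖ (Γ₁ * Ω₁⁻¹ * Γ₁ᵀ)).PosSemidef := by
  have h01 : Γ₀ᵀ * Γ₁ = 0 := by
    have := congrArg Matrix.transpose h10
    simpa [Matrix.transpose_mul] using this
  have hinv1 : Ω₁ * Ω₁⁻¹ = 1 :=
    Matrix.mul_nonsing_inv _ (isUnit_iff_ne_zero.mpr hΩ₁.det_pos.ne')
  have hinv0 : Ω₀ * Ω₀⁻¹ = 1 :=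
    Matrix.mul_nonsing_inv _ (isUnit_iff_ne_zero.mpr hΩ₀.det_pos.ne')
  have hST : (Γ₁ * Ω₁ * Γ₁ᵀ + Γ₀ * Ω₀ * Γ₀ᵀ) * (Γ₁ * Ω₁⁻¹ * Γ₁ᵀ + Γ₀ * Ω₀⁻¹ * Γ₀ᵀ) = 1 := by
    have e11 : Γ₁ * Ω₁ * Γ₁ᵀ * (Γ₁ * Ω₁⁻¹ * Γ₁ᵀ) = Γ₁ * Γ₁ᵀ := by
      calc Γ₁ * Ω₁ * Γ₁ᵀ * (Γ₁ * Ω₁⁻¹ * Γ₁ᵀ)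
          = Γ₁ * Ω₁ * (Γ₁ᵀ * Γ₁) * Ω₁⁻¹ * Γ₁ᵀ := by simp only [Matrix.mul_assoc, Matrix.mul_add, Matrix.add_mul, Matrix.mul_one, Matrix.one_mul]
        _ = Γ₁ * (Ω₁ * Ω₁⁻¹) * Γ₁ᵀ := by rw [h1]; simp only [Matrix.mul_assoc, Matrix.mul_add, Matrix.add_mul, Matrix.mul_one, Matrix.one_mul]
        _ = Γ₁ * Γ₁ᵀ := by rw [hinv1, Matrix.mul_one]
    have e00 : Γ₀ * Ω₀ * Γ₀ᵀ * (Γ₀ * Ω₀⁻¹ * Γ₀ᵀ) = Γ₀ * Γ₀ᵀ := by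
      calc Γ₀ * Ω₀ * Γ₀ᵀ * (Γ₀ * Ω₀⁻¹ * Γ₀ᵀ)
          = Γ₀ * Ω₀ * (Γ₀ᵀ * Γ₀) * Ω₀⁻¹ * Γ₀ᵀ := by simp only [Matrix.mul_assoc, Matrix.mul_add, Matrix.add_mul, Matrix.mul_one, Matrix.one_mul]
        _ = Γ₀ * (Ω₀ * Ω₀⁻¹) * Γ₀ᵀ := by rw [h0]; simp only [Matrix.mul_assoc, Matrix.mul_add, Matrix.add_mul, Matrix.mul_one, Matrix.one_mul]
        _ = Γ₀ * Γ₀ᵀ := by rw [hinv0, Matrix.mul_one]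
    have e10 : Γ₁ * Ω₁ * Γ₁ᵀ * (Γ₀ * Ω₀⁻¹ * Γ₀ᵀ) = 0 := by
      calc Γ₁ * Ω₁ * Γ₁ᵀ * (Γ₀ * Ω₀⁻¹ * Γ₀ᵀ)
          = Γ₁ * Ω₁ * (Γ₁ᵀ * Γ₀) * (Ω₀⁻¹ * Γ₀ᵀ) := by simp only [Matrix.mul_assoc, Matrix.mul_add, Matrix.add_mul, Matrix.mul_one, Matrix.one_mul]
        _ = 0 := by rw [h10]; simp
    have e01 : Γ₀ * Ω₀ * Γ₀ᵀ * (Γ₁ * Ω₁⁻¹ * Γ₁ᵀ) = 0 := by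
      calc Γ₀ * Ω₀ * Γ₀ᵀ * (Γ₁ * Ω₁⁻¹ * Γ₁ᵀ)
          = Γ₀ * Ω₀ * (Γ₀ᵀ * Γ₁) * (Ω₁⁻¹ * Γ₁ᵀ) := by simp only [Matrix.mul_assoc, Matrix.mul_add, Matrix.add_mul, Matrix.mul_one, Matrix.one_mul]
        _ = 0 := by rw [h01]; simp
    calc (Γ₁ * Ω₁ * Γ₁ᵀ + Γ₀ * Ω₀ * Γ₀ᵀ) * (Γ₁ * Ω₁⁻¹ * Γ₁ᵀ + Γ₀ * Ω₀⁻¹ * Γ₀ᵀ)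
        = Γ₁ * Ω₁ * Γ₁ᵀ * (Γ₁ * Ω₁⁻¹ * Γ₁ᵀ) + Γ₁ * Ω₁ * Γ₁ᵀ * (Γ₀ * Ω₀⁻¹ * Γ₀ᵀ)
          + (Γ₀ * Ω₀ * Γ₀ᵀ * (Γ₁ * Ω₁⁻¹ * Γ₁ᵀ) + Γ₀ * Ω₀ * Γ₀ᵀ * (Γ₀ * Ω₀⁻¹ * Γ₀ᵀ)) := by
            simp only [Matrix.mul_assoc, Matrix.mul_add, Matrix.add_mul, Matrix.mul_one, Matrix.one_mul]
            abel
      _ = 1 := by rw [e11, e00, e10, e01]; simpa using hfull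
  have hSinv : (Γ₁ * Ω₁ * Γ₁ᵀ + Γ₀ * Ω₀ * Γ₀ᵀ)⁻¹ = Γ₁ * Ω₁⁻¹ * Γ₁ᵀ + Γ₀ * Ω₀⁻¹ * Γ₀ᵀ :=
    Matrix.inv_eq_right_inv hST
  have key : SYX ⊗ₖ (Γ₁ * Ω₁ * Γ₁ᵀ + Γ₀ * Ω₀ * Γ₀ᵀ)⁻¹ - SYX ⊗ₖ (Γ₁ * Ω₁⁻¹ * Γ₁ᵀ)
      = SYX ⊗ₖ (Γ₀ * Ω₀⁻¹ * Γ₀ᵀ) := by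
    rw [hSinv, Matrix.kronecker_add]; abel
  refine ⟨key, ?_⟩
  rw [key]
  have hpsd := hΩ₀.inv.posSemidef.mul_mul_conjTranspose_same Γ₀
  rw [Matrix.conjTranspose_eq_transpose_of_trivial] at hpsd
  exact kron_posSemidef hS.posSemidef hpsd
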